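/- With D and F as in the box-product decomposition theorem: if D_{P₁,α}(G₁⁽¹⁾,G₁⁽²⁾) ≤ ε₁ and D_{P₂,α}(G₂⁽¹⁾,G₂⁽²⁾) ≤ ε₂ with P₁ᵀP₁ = I and P₂ᵀP₂ = I, then D_{P₁⊗P₂,α}(G□⁽¹⁾, G□⁽²⁾) ≤ (√(n₁⁽¹⁾) + √(n₂⁽¹⁾))·max(ε₁, ε₂). -/

import Mathlib

open Matrix Kronecker

noncomputable def frob {m n : Type*} [Fintype m] [Fintype n] (A : Matrix m n ℝ) : ℝ :=
  Real.sqrt ((Aᵀ * A).trace)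

noncomputable def lap {V : Type*} [Fintype V] [DecidableEq V]
    (G : SimpleGraph V) [DecidableRel G.Adj] : Matrix V V ℝ :=
  G.adjMatrix ℝ - G.degMatrix ℝ

noncomputable def diffDist {m n : Type*} [Fintype m] [DecidableEq m] [Fintype n] [DecidableEq n]
    (G : SimpleGraph m) [DecidableRel G.Adj] (H : SimpleGraph n) [DecidableRel H.Adj]
    (P : Matrix n m ℝ) (α : ℝ) : ℝ :=
  frob ((1 / Real.sqrt α) • (P * lap G) - Real.sqrt α • (lap H * P))

section aux

attribute [local instance] Matrix.frobeniusSeminormedAddCommGroup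

variable {l m n p : Type*} [Fintype l] [Fintype m] [Fintype n] [Fintype p]

lemma trace_tm_nonneg (A : Matrix m n ℝ) : 0 ≤ (Aᵀ * A).trace := by
  simp only [Matrix.trace, Matrix.diag, Matrix.mul_apply, Matrix.transpose_apply]
  exact Finset.sum_nonneg fun j _ => Finset.sum_nonneg fun i _ => mul_self_nonneg _

lemma frob_nonneg (A : Matrix m n ℝ) : 0 ≤ frob A := Real.sqrt_nonneg _

lemma frob_eq_norm (A : Matrix m n ℝ) : frob A = ‖A‖ := by
  rw [frob, Matrix.frobenius_norm_def, Real.sqrt_eq_rpow]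
  congr 1
  simp only [Matrix.trace, Matrix.diag, Matrix.mul_apply, Matrix.transpose_apply,
    Real.norm_eq_abs]
  rw [Finset.sum_comm]
  refine Finset.sum_congr rfl fun i _ => Finset.sum_congr rfl fun j _ => ?_
  rw [show (2:ℝ) = ((2:ℕ):ℝ) by norm_num, Real.rpow_natCast, sq_abs, sq]

lemma frob_add_le (A B : Matrix m n ℝ) : frob (A + B) ≤ frob A + frob B := by
  simp only [frob_eq_norm]; exact norm_add_le A B

lemma frob_kronecker (A : Matrix l m ℝ) (B : Matrix n p ℝ) :
    frob (A ⊗ₖ B) = frob A * frob B := by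
  unfold frob
  rw [show (A ⊗ₖ B)ᵀ = Aᵀ ⊗ₖ Bᵀ from (Matrix.kroneckerMap_transpose _ _ _).symm,
    ← Matrix.mul_kronecker_mul, Matrix.trace_kronecker, Real.sqrt_mul (trace_tm_nonneg A)]

lemma frob_orth [DecidableEq m] (P : Matrix n m ℝ) (h : Pᵀ * P = 1) :
    frob P = Real.sqrt (Fintype.card m) := by
  rw [frob, h, Matrix.trace_one]

lemma sub_kronecker (A B : Matrix l m ℝ) (C : Matrix n p ℝ) :
    (A - B) ⊗ₖ C = A ⊗ₖ C - B ⊗ₖ C := by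
  ext i j; simp [sub_mul]

lemma kronecker_sub' (A : Matrix l m ℝ) (B C : Matrix n p ℝ) :
    A ⊗ₖ (B - C) = A ⊗ₖ B - A ⊗ₖ C := by
  ext i j; simp [mul_sub]

lemma smul_kronecker' (r : ℝ) (A : Matrix l m ℝ) (B : Matrix n p ℝ) :
    (r • A) ⊗ₖ B = r • (A ⊗ₖ B) := by
  ext i j; simp [mul_assoc]

lemma kronecker_smul' (r : ℝ) (A : Matrix l m ℝ) (B : Matrix n p ℝ) :
    A ⊗ₖ (r • B) = r • (A ⊗ₖ B) := by
  ext i j; simp; ring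

lemma lap_boxProd {m n : Type*} [Fintype m] [DecidableEq m] [Fintype n] [DecidableEq n]
    (G : SimpleGraph m) (H : SimpleGraph n) [DecidableRel G.Adj] [DecidableRel H.Adj]
    [DecidableRel (G □ H).Adj] :
    lap (G □ H) = lap G ⊗ₖ (1 : Matrix n n ℝ) + (1 : Matrix m m ℝ) ⊗ₖ lap H := by
  have hadj : (G □ H).adjMatrix ℝ =
      G.adjMatrix ℝ ⊗ₖ (1 : Matrix n n ℝ) + (1 : Matrix m m ℝ) ⊗ₖ H.adjMatrix ℝ := by
    ext ⟨a, b⟩ ⟨c, d⟩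
    simp only [SimpleGraph.adjMatrix_apply, Matrix.add_apply, Matrix.kroneckerMap_apply,
      SimpleGraph.boxProd_adj, Matrix.one_apply]
    by_cases hac : a = c <;> by_cases hbd : b = d <;>
      simp_all [SimpleGraph.irrefl]
  have hdeg : (G □ H).degMatrix ℝ =
      G.degMatrix ℝ ⊗ₖ (1 : Matrix n n ℝ) + (1 : Matrix m m ℝ) ⊗ₖ H.degMatrix ℝ := by
    ext ⟨a, b⟩ ⟨c, d⟩
    simp only [SimpleGraph.degMatrix, Matrix.diagonal, Matrix.add_apply,
      Matrix.kroneckerMap_apply, Matrix.one_apply, Matrix.of_apply]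
    have hd : ((@SimpleGraph.degree _ (G □ H) (a, b)
        ((G □ H).neighborSetFintype (a, b))) : ℝ) = (G.degree a : ℝ) + (H.degree b : ℝ) := by
      have h := SimpleGraph.degree_boxProd (G := G) (H := H) (a, b)
      have h2 : @SimpleGraph.degree _ (G □ H) (a, b) ((G □ H).neighborSetFintype (a, b))
          = G.degree a + H.degree b := by
        convert h using 2
      exact_mod_cast h2
    by_cases hac : a = c <;> by_cases hbd : b = d <;>
      simp_all [Prod.ext_iff] <;> exact_mod_cast hd
  rw [lap, hadj, hdeg, lap, lap]
  ext i j
  simp [Matrix.kroneckerMap_apply, sub_mul, mul_sub]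
  ring

end aux

theorem stmt13 {a₁ a₂ b₁ b₂ : ℕ}
    (G₁₁ : SimpleGraph (Fin a₁)) (G₁₂ : SimpleGraph (Fin a₂))
    (G₂₁ : SimpleGraph (Fin b₁)) (G₂₂ : SimpleGraph (Fin b₂))
    [DecidableRel G₁₁.Adj] [DecidableRel G₁₂.Adj]
    [DecidableRel G₂₁.Adj] [DecidableRel G₂₂.Adj]
    [DecidableRel (G₁₁ □ G₂₁).Adj] [DecidableRel (G₁₂ □ G₂₂).Adj]
    (P₁ : Matrix (Fin a₂) (Fin a₁) ℝ) (P₂ : Matrix (Fin b₂) (Fin b₁) ℝ)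
    (hP₁ : P₁ᵀ * P₁ = 1) (hP₂ : P₂ᵀ * P₂ = 1)
    (α : ℝ) (hα : 0 < α) (ε₁ ε₂ : ℝ)
    (hε₁ : diffDist G₁₁ G₁₂ P₁ α ≤ ε₁) (hε₂ : diffDist G₂₁ G₂₂ P₂ α ≤ ε₂) :
    diffDist (G₁₁ □ G₂₁) (G₁₂ □ G₂₂) (P₁ ⊗ₖ P₂) α ≤
      (Real.sqrt a₁ + Real.sqrt b₁) * max ε₁ ε₂ := by
  set s := Real.sqrt α with hs
  set E₁ := (1 / s) • (P₁ * lap G₁₁) - s • (lap G₁₂ * P₁) with hE₁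
  set E₂ := (1 / s) • (P₂ * lap G₂₁) - s • (lap G₂₂ * P₂) with hE₂
  have key : (1 / s) • ((P₁ ⊗ₖ P₂) * lap (G₁₁ □ G₂₁)) - s • (lap (G₁₂ □ G₂₂) * (P₁ ⊗ₖ P₂))
      = E₁ ⊗ₖ P₂ + P₁ ⊗ₖ E₂ := by
    rw [lap_boxProd G₁₁ G₂₁, lap_boxProd G₁₂ G₂₂, Matrix.mul_add, Matrix.add_mul,
      ← Matrix.mul_kronecker_mul, ← Matrix.mul_kronecker_mul, ← Matrix.mul_kronecker_mul,
      ← Matrix.mul_kronecker_mul, Matrix.mul_one, Matrix.one_mul, Matrix.mul_one, Matrix.one_mul,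
      hE₁, hE₂, sub_kronecker, kronecker_sub', smul_kronecker', smul_kronecker',
      kronecker_smul', kronecker_smul', smul_add, smul_add]
    abel
  have hε₁' : frob E₁ ≤ ε₁ := hε₁
  have hε₂' : frob E₂ ≤ ε₂ := hε₂
  have h1 : (0:ℝ) ≤ ε₁ := le_trans (frob_nonneg _) hε₁'
  have h2 : (0:ℝ) ≤ ε₂ := le_trans (frob_nonneg _) hε₂'
  have hPa : frob P₁ = Real.sqrt a₁ := by
    rw [frob_orth P₁ hP₁, Fintype.card_fin]
  have hPb : frob P₂ = Real.sqrt b₁ := by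
    rw [frob_orth P₂ hP₂, Fintype.card_fin]
  calc diffDist (G₁₁ □ G₂₁) (G₁₂ □ G₂₂) (P₁ ⊗ₖ P₂) α
      = frob (E₁ ⊗ₖ P₂ + P₁ ⊗ₖ E₂) := by rw [diffDist, key]
    _ ≤ frob (E₁ ⊗ₖ P₂) + frob (P₁ ⊗ₖ E₂) := frob_add_le _ _
    _ = frob E₁ * Real.sqrt b₁ + Real.sqrt a₁ * frob E₂ := by
        rw [frob_kronecker, frob_kronecker, hPa, hPb]
    _ ≤ ε₁ * Real.sqrt b₁ + Real.sqrt a₁ * ε₂ := by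
        exact add_le_add (mul_le_mul_of_nonneg_right hε₁' (Real.sqrt_nonneg _))
          (mul_le_mul_of_nonneg_left hε₂' (Real.sqrt_nonneg _))
    _ ≤ (Real.sqrt a₁ + Real.sqrt b₁) * max ε₁ ε₂ := by
        have m1 : ε₁ ≤ max ε₁ ε₂ := le_max_left _ _
        have m2 : ε₂ ≤ max ε₁ ε₂ := le_max_right _ _
        have sa := Real.sqrt_nonneg (a₁ : ℝ)
        have sb := Real.sqrt_nonneg (b₁ : ℝ)
        nlinarith
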